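/- arXiv:2307.15726 — 2 statements merged into one kernel-verified Lean document; each statement's English description precedes it below -/
import Mathlib

section
/- Let (W,S) be a Coxeter system and a, b, c ∈ W with a ≤ b in the Bruhat order. Then a * c ≤ b * c, where * denotes the Demazure product (the product in the Coxeter monoid, characterized by s * s = s and the braid relations). -/
namespace CoxeterPaper

open CoxeterSystem

variable {B : Type*} {W : Type*} [Group W] {M : CoxeterMatrix B}

/-- The Bruhat order on a Coxeter group: the reflexive-transitive closure of the
relation `a < a * t` for `t` a reflection with length increasing. -/
def BruhatLE (cs : CoxeterSystem M W) (x y : W) : Prop :=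
  Relation.ReflTransGen
    (fun a b => (∃ t, cs.IsReflection t ∧ b = a * t) ∧ cs.length a < cs.length b) x y

/-- One step of the Demazure product with a simple reflection. -/
noncomputable def demStep (cs : CoxeterSystem M W) (x : W) (i : B) : W :=
  if cs.length x < cs.length (x * cs.simple i) then x * cs.simple i else x

/-- The Demazure product of `x` with the word `l`. -/
noncomputable def demWord (cs : CoxeterSystem M W) (x : W) (l : List B) : W :=
  l.foldl (demStep cs) x

/-- The Demazure product (Coxeter monoid product) of two elements: fold the
Demazure action of a reduced word of `y` onto `x`. -/
noncomputable def dem (cs : CoxeterSystem M W) (x y : W) : W :=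
  demWord cs x (Classical.choose (cs.exists_reduced_word y))

/-- The standard parabolic subgroup attached to a set of simple indices. -/
def parabolic (cs : CoxeterSystem M W) (I : Set B) : Subgroup W :=
  Subgroup.closure (cs.simple '' I)

/-- `I` is finitary if the parabolic subgroup `W_I` is finite. -/
def Finitary (cs : CoxeterSystem M W) (I : Set B) : Prop :=
  (parabolic cs I : Set W).Finite

/-- The double coset `W_I w W_J` as a subset of `W`. -/
def doset (cs : CoxeterSystem M W) (I J : Set B) (w : W) : Set W :=
  {x | ∃ a ∈ parabolic cs I, ∃ b ∈ parabolic cs J, x = a * w * b}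

/-- `p` is an `(I,J)`-double coset. -/
def IsDCoset (cs : CoxeterSystem M W) (I J : Set B) (p : Set W) : Prop :=
  ∃ w, p = doset cs I J w

/-- `m` is the Bruhat-minimal element of `p`. -/
def IsMinOf (cs : CoxeterSystem M W) (p : Set W) (m : W) : Prop :=
  m ∈ p ∧ ∀ x ∈ p, BruhatLE cs m x

/-- `m` is the Bruhat-maximal element of `p`. -/
def IsMaxOf (cs : CoxeterSystem M W) (p : Set W) (m : W) : Prop :=
  m ∈ p ∧ ∀ x ∈ p, BruhatLE cs x m

/-- `[I 0, …, I d]` is a singlestep expression. -/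
def IsSinglestep (I : ℕ → Set B) (d : ℕ) : Prop :=
  ∀ k < d, (∃ s, s ∉ I k ∧ I (k + 1) = insert s (I k)) ∨
    (∃ s, s ∈ I k ∧ I (k + 1) = I k \ {s})

/-- `p` is a path subordinate to the singlestep expression `[I 0, …, I d]`. -/
def IsSubPath (cs : CoxeterSystem M W) (I : ℕ → Set B) (d : ℕ) (p : ℕ → Set W) : Prop :=
  p 0 = doset cs (I 0) (I 0) 1 ∧
  (∀ i ≤ d, IsDCoset cs (I 0) (I i) (p i)) ∧
  ∀ k < d, (I k ⊆ I (k + 1) → p k ⊆ p (k + 1)) ∧ (I (k + 1) ⊆ I k → p (k + 1) ⊆ p k)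

/-- The Demazure product `w_{I_0} * w_{I_1} * ⋯ * w_{I_d}` of the longest elements
`wI 0, …, wI d`. -/
noncomputable def exprMax (cs : CoxeterSystem M W) (wI : ℕ → W) (d : ℕ) : W :=
  ((List.range d).map fun k => wI (k + 1)).foldl (dem cs) (wI 0)


/-! ### Auxiliary development: the reflection-parity representation and strong exchange -/

section Aux

open Classical List

variable (cs : CoxeterSystem M W)

local prefix:100 "s" => cs.simple
local prefix:100 "π" => cs.wordProd
local prefix:100 "ℓ" => cs.length
local prefix:100 "ris" => cs.rightInvSeq

/-- The underlying function of the reflection-parity action of a simple reflection. -/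
noncomputable def refP (i : B) : W × ZMod 2 → W × ZMod 2 :=
  fun p => (s i * p.1 * s i, p.2 + if p.1 = s i then 1 else 0)

lemma simple_conj_eq_iff (i i' : B) (t c : W) :
    s i * (s i' * t * s i') * s i = c ↔ t = s i' * (s i * c * s i) * s i' := by
  constructor
  · intro h
    rw [← h]
    simp [mul_assoc, cs.simple_mul_simple_cancel_left]
  · intro h
    subst h
    simp [mul_assoc, cs.simple_mul_simple_cancel_left]

lemma refP_involutive (i : B) : Function.Involutive (refP cs i) := by
  rintro ⟨t, ε⟩
  have h2 : (s i * t * s i = s i) ↔ (t = s i) := by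
    constructor
    · intro h
      have h' : t * s i = 1 := mul_left_cancel (a := s i) (by rw [← mul_assoc, h, mul_one])
      rw [← cs.inv_simple]
      exact eq_inv_of_mul_eq_one_left h'
    · rintro rfl
      rw [cs.simple_mul_simple_self, one_mul]
  refine Prod.ext ?_ ?_
  · simp [refP, mul_assoc, cs.simple_mul_simple_cancel_left]
  · simp only [refP]
    by_cases h : t = s i
    · rw [if_pos h]; simp only [h2.mpr h, ↓reduceIte]; rw [add_assoc,
        show (1 : ZMod 2) + 1 = 0 by decide, add_zero]
    · rw [if_neg h]; simp only [show ¬(s i * t * s i = s i) from fun hc => h (h2.mp hc), ↓reduceIte]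
      simp

/-- The reflection-parity action of a simple reflection, as a permutation. -/
noncomputable def refPerm (i : B) : Equiv.Perm (W × ZMod 2) :=
  (refP_involutive cs i).toPerm

lemma refPerm_apply (i : B) (t : W) (ε : ZMod 2) :
    refPerm cs i (t, ε) = (s i * t * s i, ε + if t = s i then 1 else 0) := rfl

lemma refPerm_mul_pow_apply (i i' : B) (n : ℕ) (t : W) (ε : ZMod 2) :
    ((refPerm cs i * refPerm cs i') ^ n) (t, ε) =
      ((s i * s i') ^ n * t * (s i' * s i) ^ n,
        ε + ∑ j ∈ Finset.range (2 * n),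
          if t = s i' * (s i * s i') ^ j then 1 else 0) := by
  induction n generalizing t ε with
  | zero => simp
  | succ n ih =>
    rw [pow_succ, Equiv.Perm.mul_apply, Equiv.Perm.mul_apply, refPerm_apply, refPerm_apply, ih]
    refine Prod.ext ?_ ?_
    · show (s i * s i') ^ n * (s i * (s i' * t * s i') * s i) * (s i' * s i) ^ n
        = (s i * s i') ^ (n + 1) * t * (s i' * s i) ^ (n + 1)
      rw [pow_succ, pow_succ']
      simp only [mul_assoc]
    · show ε + (if t = s i' then 1 else 0) + (if s i' * t * s i' = s i then 1 else 0)
        + ∑ j ∈ Finset.range (2 * n),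
            (if s i * (s i' * t * s i') * s i = s i' * (s i * s i') ^ j then 1 else 0)
        = ε + ∑ j ∈ Finset.range (2 * (n + 1)),
            (if t = s i' * (s i * s i') ^ j then 1 else 0)
      have key : ∀ j : ℕ, s i' * (s i * (s i' * (s i * s i') ^ j) * s i) * s i'
          = s i' * (s i * s i') ^ (j + 2) := by
        intro j
        have h1 : s i * (s i' * (s i * s i') ^ j) = (s i * s i') ^ j * (s i * s i') := by
          rw [← mul_assoc, ← pow_succ', pow_succ]
        rw [h1, pow_add]
        simp only [pow_two, mul_assoc]
      have e1 : (if s i' * t * s i' = s i then (1 : ZMod 2) else 0)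
          = (if t = s i' * (s i * s i') ^ 1 then 1 else 0) := by
        refine if_congr ?_ rfl rfl
        rw [pow_one]
        constructor
        · intro h; rw [← h]; simp [mul_assoc, cs.simple_mul_simple_cancel_left,
            cs.simple_mul_simple_self]
        · rintro rfl; simp [mul_assoc, cs.simple_mul_simple_cancel_left,
            cs.simple_mul_simple_self]
      have e2 : ∀ j : ℕ,
          (if s i * (s i' * t * s i') * s i = s i' * (s i * s i') ^ j then (1 : ZMod 2) else 0)
          = (if t = s i' * (s i * s i') ^ (j + 2) then 1 else 0) := by
        intro j
        refine if_congr ?_ rfl rfl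
        rw [simple_conj_eq_iff cs i i' t (s i' * (s i * s i') ^ j), key j]
      have e0 : (if t = s i' then (1 : ZMod 2) else 0)
          = (if t = s i' * (s i * s i') ^ 0 then 1 else 0) := by simp
      rw [e0, e1, Finset.sum_congr rfl (fun j _ => e2 j)]
      have hr : 2 * (n + 1) = (2 * n + 1) + 1 := by ring
      rw [hr, Finset.sum_range_succ', Finset.sum_range_succ']
      have hrw : ∀ j : ℕ, j + 1 + 1 = j + 2 := fun j => rfl
      simp only [hrw, Nat.zero_add, zero_add]
      ring

lemma refPerm_liftable : M.IsLiftable (refPerm cs) := by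
  intro i i'
  rcases Nat.eq_zero_or_pos (M i i') with h | _
  · rw [h, pow_zero]
  · ext ⟨t, ε⟩
    · rw [refPerm_mul_pow_apply, cs.simple_mul_simple_pow i i',
        cs.simple_mul_simple_pow' i i']
      simp
    · rw [refPerm_mul_pow_apply]
      have hsum : ∑ j ∈ Finset.range (2 * M i i'),
          (if t = s i' * (s i * s i') ^ j then (1 : ZMod 2) else 0) = 0 := by
        rw [two_mul, Finset.sum_range_add]
        have : ∀ j : ℕ, (if t = s i' * (s i * s i') ^ (M i i' + j) then (1 : ZMod 2) else 0)
            = (if t = s i' * (s i * s i') ^ j then 1 else 0) := by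
          intro j
          rw [pow_add, cs.simple_mul_simple_pow i i', one_mul]
        rw [Finset.sum_congr rfl (fun j _ => this j)]
        have h2 : ∀ x : ZMod 2, x + x = 0 := by decide
        exact h2 _
      simp [hsum]

/-- The reflection-parity representation of the Coxeter group. -/
noncomputable def phiRep : W →* Equiv.Perm (W × ZMod 2) :=
  cs.lift ⟨refPerm cs, refPerm_liftable cs⟩

lemma phiRep_simple (i : B) : phiRep cs (s i) = refPerm cs i :=
  cs.lift_apply_simple (refPerm_liftable cs) i

lemma phiRep_wordProd (ω : List B) (t : W) (ε : ZMod 2) :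
    phiRep cs (π ω) (t, ε) = (π ω * t * (π ω)⁻¹, ε + ((ris ω).count t : ZMod 2)) := by
  induction ω generalizing ε with
  | nil => simp
  | cons i ω ih =>
    rw [wordProd_cons, map_mul, Equiv.Perm.mul_apply, ih, phiRep_simple, refPerm_apply]
    refine Prod.ext ?_ ?_
    · show s i * (π ω * t * (π ω)⁻¹) * s i = π (i :: ω) * t * (π (i :: ω))⁻¹
      rw [wordProd_cons, mul_inv_rev, cs.inv_simple]
      group
    · show ε + ((ris ω).count t : ZMod 2) + (if π ω * t * (π ω)⁻¹ = s i then 1 else 0)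
        = ε + (((ris (i :: ω)).count t : ℕ) : ZMod 2)
      have hris : ris (i :: ω) = ((π ω)⁻¹ * s i * π ω) :: ris ω := rfl
      rw [hris, List.count_cons]
      have hiff : (π ω * t * (π ω)⁻¹ = s i) ↔ ((π ω)⁻¹ * s i * π ω = t) := by
        constructor
        · intro h; rw [← h]; group
        · intro h; rw [← h]; group
      simp only [beq_iff_eq]
      by_cases h : π ω * t * (π ω)⁻¹ = s i
      · rw [if_pos h, if_pos (hiff.mp h)]
        push_cast
        ring
      · rw [if_neg h, if_neg (fun hc => h (hiff.mpr hc))]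
        push_cast
        ring

/-- The parity of the number of times `t` occurs in the inversion sequence of a word for `w`. -/
noncomputable def nuP (w t : W) : ZMod 2 := (phiRep cs w (t, 0)).2

lemma nuP_wordProd (ω : List B) (t : W) :
    nuP cs (π ω) t = ((ris ω).count t : ZMod 2) := by
  rw [nuP, phiRep_wordProd]; simp

lemma phiRep_apply (w t : W) (ε : ZMod 2) :
    phiRep cs w (t, ε) = (w * t * w⁻¹, ε + nuP cs w t) := by
  obtain ⟨ω, _, rfl⟩ := cs.exists_reduced_word w
  rw [phiRep_wordProd, nuP_wordProd]

lemma nuP_one (t : W) : nuP cs 1 t = 0 := by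
  rw [nuP, map_one]; rfl

lemma nuP_mul (w v t : W) : nuP cs (w * v) t = nuP cs v t + nuP cs w (v * t * v⁻¹) := by
  have h1 : phiRep cs (w * v) (t, 0) = phiRep cs w (phiRep cs v (t, 0)) := by
    rw [map_mul, Equiv.Perm.mul_apply]
  rw [phiRep_apply cs v t 0] at h1
  rw [phiRep_apply cs w] at h1
  have := congrArg Prod.snd h1
  simpa [nuP] using this

lemma nuP_simple_self (i : B) : nuP cs (s i) (s i) = 1 := by
  rw [nuP, phiRep_simple, refPerm_apply]
  simp

lemma nuP_inv_add (w t : W) : nuP cs w⁻¹ t + nuP cs w (w⁻¹ * t * w) = 0 := by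
  have := nuP_mul cs w w⁻¹ t
  rw [mul_inv_cancel, nuP_one, inv_inv] at this
  exact this.symm

lemma nuP_reflection_self {t : W} (ht : cs.IsReflection t) : nuP cs t t = 1 := by
  obtain ⟨u, i, rfl⟩ := ht
  set t := u * s i * u⁻¹ with hts
  have hA : (s i * u⁻¹) * t * (s i * u⁻¹)⁻¹ = s i := by
    rw [hts]
    simp [mul_assoc, cs.simple_mul_simple_cancel_left]
  have hB : u⁻¹ * t * u = s i := by
    rw [hts]
    simp [mul_assoc]
  have h1 : nuP cs t t = nuP cs (s i * u⁻¹) t + nuP cs u (s i) := by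
    have := nuP_mul cs u (s i * u⁻¹) t
    rw [hA] at this
    have hrw : u * (s i * u⁻¹) = t := by rw [hts]; group
    rwa [hrw] at this
  have h2 : nuP cs (s i * u⁻¹) t = nuP cs u⁻¹ t + 1 := by
    have := nuP_mul cs (s i) u⁻¹ t
    rw [inv_inv, hB, nuP_simple_self] at this
    exact this
  have h3 : nuP cs u⁻¹ t + nuP cs u (s i) = 0 := by
    have := nuP_inv_add cs u t
    rwa [hB] at this
  rw [h1, h2]
  calc nuP cs u⁻¹ t + 1 + nuP cs u (s i)
      = (nuP cs u⁻¹ t + nuP cs u (s i)) + 1 := by ring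
    _ = 1 := by rw [h3, zero_add]

lemma length_mul_lt_of_nuP_eq_one {w t : W} (ht : cs.IsReflection t)
    (h1 : nuP cs w t = 1) : ℓ (w * t) < ℓ w := by
  obtain ⟨ω, hlen, rfl⟩ := cs.exists_reduced_word w
  have hcount : ((ris ω).count t : ZMod 2) = 1 := by rw [← nuP_wordProd, h1]
  have hmem : t ∈ ris ω := by
    by_contra hm
    rw [List.count_eq_zero_of_not_mem hm] at hcount
    exact absurd hcount (by decide)
  obtain ⟨j, hj, hjt⟩ := List.getElem_of_mem hmem
  have hjlen : j < ω.length := by simpa using hj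
  have hgetd : (ris ω).getD j 1 = t := by
    rw [List.getD_eq_getElem _ _ hj, hjt]
  have heq : π ω * t = π (ω.eraseIdx j) := by
    rw [← hgetd]; exact cs.wordProd_mul_getD_rightInvSeq ω j
  calc ℓ (π ω * t) = ℓ (π (ω.eraseIdx j)) := by rw [heq]
    _ ≤ (ω.eraseIdx j).length := cs.length_wordProd_le _
    _ < ω.length := by rw [List.length_eraseIdx_of_lt hjlen]; omega
    _ = ℓ (π ω) := hlen.symm

lemma nuP_eq_one_of_length_lt {w t : W} (ht : cs.IsReflection t)
    (h : ℓ (w * t) < ℓ w) : nuP cs w t = 1 := by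
  by_contra hne
  have h0 : nuP cs w t = 0 := by
    have : ∀ x : ZMod 2, x = 0 ∨ x = 1 := by decide
    rcases this (nuP cs w t) with h' | h'
    · exact h'
    · exact absurd h' hne
  have hwt : nuP cs (w * t) t = 1 := by
    have hmul := nuP_mul cs w t t
    have hrw : t * t * t⁻¹ = t := by rw [mul_assoc, mul_inv_cancel, mul_one]
    rw [hrw, nuP_reflection_self cs ht, h0, add_zero] at hmul
    exact hmul
  have := length_mul_lt_of_nuP_eq_one cs ht hwt
  rw [mul_assoc, ht.mul_self, mul_one] at this
  omega

lemma strong_exchange {ω : List B} (hred : cs.IsReduced ω) {t : W} (ht : cs.IsReflection t)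
    (hlt : ℓ (π ω * t) < ℓ (π ω)) :
    ∃ j, j < ω.length ∧ π (ω.eraseIdx j) = π ω * t := by
  have h1 : nuP cs (π ω) t = 1 := nuP_eq_one_of_length_lt cs ht hlt
  have hcount : ((ris ω).count t : ZMod 2) = 1 := by rw [← nuP_wordProd, h1]
  have hmem : t ∈ ris ω := by
    by_contra hm
    rw [List.count_eq_zero_of_not_mem hm] at hcount
    exact absurd hcount (by decide)
  obtain ⟨j, hj, hjt⟩ := List.getElem_of_mem hmem
  have hjlen : j < ω.length := by simpa using hj
  have hgetd : (ris ω).getD j 1 = t := by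
    rw [List.getD_eq_getElem _ _ hj, hjt]
  refine ⟨j, hjlen, ?_⟩
  rw [← cs.wordProd_mul_getD_rightInvSeq ω j, hgetd]

lemma bruhatLE_of_step {a b : W} (t : W) (ht : cs.IsReflection t) (hb : b = a * t)
    (hl : ℓ a < ℓ b) : BruhatLE cs a b :=
  Relation.ReflTransGen.single ⟨⟨t, ht, hb⟩, hl⟩

lemma bruhat_erase {ω : List B} (hred : cs.IsReduced ω) {j : ℕ} (hj : j < ω.length) :
    BruhatLE cs (π (ω.eraseIdx j)) (π ω) := by
  set t := (ris ω).getD j 1 with hts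
  have hjr : j < (ris ω).length := by rwa [cs.length_rightInvSeq]
  have htmem : t ∈ ris ω := by
    rw [hts, List.getD_eq_getElem _ _ hjr]
    exact List.getElem_mem hjr
  have ht : cs.IsReflection t := cs.isReflection_of_mem_rightInvSeq ω htmem
  have heq : π ω * t = π (ω.eraseIdx j) := cs.wordProd_mul_getD_rightInvSeq ω j
  have heq2 : π ω = π (ω.eraseIdx j) * t := by
    rw [← heq, mul_assoc, ht.mul_self, mul_one]
  have hlen : ℓ (π (ω.eraseIdx j)) < ℓ (π ω) := by
    calc ℓ (π (ω.eraseIdx j)) ≤ (ω.eraseIdx j).length := cs.length_wordProd_le _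
      _ < ω.length := by rw [List.length_eraseIdx_of_lt hj]; omega
      _ = ℓ (π ω) := hred.symm
  exact bruhatLE_of_step cs t ht heq2 hlen

lemma lift_hard (i : B) {a b t : W} (ht : cs.IsReflection t) (hb : b = a * t)
    (hab : ℓ a < ℓ b) (has : ℓ a < ℓ (a * s i)) (hbs : ℓ (b * s i) < ℓ b) :
    BruhatLE cs (a * s i) b := by
  set u := b * s i with hu
  have hub : ℓ b = ℓ u + 1 := by
    rcases cs.length_mul_simple b i with h | h <;> rw [← hu] at h <;> omega
  obtain ⟨ρ, hρlen, hρ⟩ := cs.exists_reduced_word u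
  have hρred : cs.IsReduced ρ := hρlen
  set ω := ρ ++ [i] with hω
  have hπω : π ω = b := by
    rw [hω, wordProd_append, wordProd_singleton, ← hρ, hu, mul_assoc,
      cs.simple_mul_simple_self, mul_one]
  have hωred : cs.IsReduced ω := by
    rw [CoxeterSystem.IsReduced, hπω, hω, List.length_append, List.length_singleton,
      ← (show ℓ u = ρ.length by rw [hρ]; exact hρlen), ← hub]
  have hbt : π ω * t = a := by
    rw [hπω, hb, mul_assoc, ht.mul_self, mul_one]
  have hlt : ℓ (π ω * t) < ℓ (π ω) := by rw [hbt, hπω]; exact hab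
  obtain ⟨j, hj, hje⟩ := strong_exchange cs hωred ht hlt
  rw [hbt] at hje
  have hjlen : j < ρ.length + 1 := by
    rw [hω, List.length_append, List.length_singleton] at hj
    exact hj
  rcases Nat.lt_or_ge j ρ.length with hjρ | hjρ
  · have he : ω.eraseIdx j = ρ.eraseIdx j ++ [i] :=
      List.eraseIdx_append_of_lt_length hjρ [i]
    have ha : a = π (ρ.eraseIdx j) * s i := by
      rw [← hje, he, wordProd_append, wordProd_singleton]
    have has2 : a * s i = π (ρ.eraseIdx j) := by
      rw [ha, mul_assoc, cs.simple_mul_simple_self, mul_one]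
    have h1 : BruhatLE cs (a * s i) (π ρ) := by
      rw [has2]
      exact bruhat_erase cs hρred hjρ
    have h2 : BruhatLE cs (π ρ) b := by
      refine bruhatLE_of_step cs (s i) (cs.isReflection_simple i) ?_ ?_
      · rw [← hρ, hu, mul_assoc, cs.simple_mul_simple_self, mul_one]
      · rw [← hρ]; omega
    exact h1.trans h2
  · have hjeq : j = ρ.length := by omega
    have he : ω.eraseIdx j = ρ := by
      rw [hjeq, hω, List.eraseIdx_append_of_length_le (le_refl ρ.length) [i]]
      simp
    have ha : a = u := by rw [← hje, he, ← hρ]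
    have hasb : a * s i = b := by
      rw [ha, hu, mul_assoc, cs.simple_mul_simple_self, mul_one]
    rw [hasb]
    exact Relation.ReflTransGen.refl

lemma demStep_mono_step (i : B) {a b : W}
    (h : (∃ t, cs.IsReflection t ∧ b = a * t) ∧ ℓ a < ℓ b) :
    BruhatLE cs (demStep cs a i) (demStep cs b i) := by
  obtain ⟨⟨t, ht, hb⟩, hab⟩ := h
  rcases Nat.lt_or_gt_of_ne (cs.length_mul_simple_ne a i) with ha2 | ha2 <;>
    rcases Nat.lt_or_gt_of_ne (cs.length_mul_simple_ne b i) with hb2 | hb2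
  · -- ℓ(as) < ℓ a, ℓ(bs) < ℓ b : a ≤ b
    rw [demStep, demStep, if_neg (by omega), if_neg (by omega)]
    exact bruhatLE_of_step cs t ht hb hab
  · -- ℓ(as) < ℓ a, ℓ b < ℓ(bs) : a ≤ b ≤ bs
    rw [demStep, demStep, if_neg (by omega), if_pos hb2]
    exact (bruhatLE_of_step cs t ht hb hab).trans
      (bruhatLE_of_step cs (s i) (cs.isReflection_simple i) rfl hb2)
  · -- ℓ a < ℓ(as), ℓ(bs) < ℓ b : hard case
    rw [demStep, demStep, if_pos ha2, if_neg (by omega)]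
    exact lift_hard cs i ht hb hab ha2 hb2
  · -- ℓ a < ℓ(as), ℓ b < ℓ(bs) : as ≤ bs
    rw [demStep, demStep, if_pos ha2, if_pos hb2]
    have hlas : ℓ (a * s i) = ℓ a + 1 := by
      rcases cs.length_mul_simple a i with h | h <;> omega
    have hlbs : ℓ (b * s i) = ℓ b + 1 := by
      rcases cs.length_mul_simple b i with h | h <;> omega
    refine bruhatLE_of_step cs (s i * t * s i) ?_ ?_ (by omega)
    · have := ht.conj (s i)
      rwa [cs.inv_simple] at this
    · rw [hb]
      simp [mul_assoc, cs.simple_mul_simple_cancel_left]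

lemma demStep_mono (i : B) {a b : W} (h : BruhatLE cs a b) :
    BruhatLE cs (demStep cs a i) (demStep cs b i) := by
  induction h with
  | refl => exact Relation.ReflTransGen.refl
  | tail _ hstep ih => exact ih.trans (demStep_mono_step cs i hstep)

lemma demWord_mono (l : List B) {a b : W} (h : BruhatLE cs a b) :
    BruhatLE cs (demWord cs a l) (demWord cs b l) := by
  induction l generalizing a b with
  | nil => exact h
  | cons i l ih => exact ih (demStep_mono cs i h)

end Aux

/-- If `a ≤ b` in Bruhat order then `a * c ≤ b * c` for the Demazure product. -/
theorem dem_mono_left (cs : CoxeterSystem M W) (a b c : W) (h : BruhatLE cs a b) :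
    BruhatLE cs (dem cs a c) (dem cs b c) :=
  demWord_mono cs _ h

end CoxeterPaper
end

section
/- Let (W,S) be a Coxeter system and v, w, x, z ∈ W with v ≤ w and w = zx with ℓ(w) = ℓ(z) + ℓ(x). Then there exists x' ≤ x⁻¹ such that v x' ≤ z. -/
namespace CoxeterPaper

open CoxeterSystem

variable {B : Type*} {W : Type*} [Group W] {M : CoxeterMatrix B}

set_option linter.unusedSectionVars false
set_option maxHeartbeats 1000000

section LiftingAux

open List

attribute [local instance] Classical.propDecidable

/-- Count (mod 2) of occurrences of `t` in a list. -/
noncomputable def refCount : List W → W → ZMod 2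
  | [], _ => 0
  | x :: l, t => (if x = t then 1 else 0) + refCount l t

theorem refCount_nil (t : W) : refCount ([] : List W) t = 0 := rfl

theorem refCount_cons (x : W) (l : List W) (t : W) :
    refCount (x :: l) t = (if x = t then 1 else 0) + refCount l t := rfl

theorem refCount_append (l₁ l₂ : List W) (t : W) :
    refCount (l₁ ++ l₂) t = refCount l₁ t + refCount l₂ t := by
  induction l₁ with
  | nil => simp [refCount_nil]
  | cons x l ih => simp [refCount_cons, ih, add_assoc]

theorem refCount_eq_zero_of_not_mem {l : List W} {t : W} (h : t ∉ l) : refCount l t = 0 := by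
  induction l with
  | nil => rfl
  | cons x l ih =>
    simp only [List.mem_cons, not_or] at h
    rw [refCount_cons, if_neg (fun hx => h.1 hx.symm), ih h.2, add_zero]

theorem mem_of_refCount_eq_one {l : List W} {t : W} (h : refCount l t = 1) : t ∈ l := by
  by_contra hc
  rw [refCount_eq_zero_of_not_mem hc] at h
  exact one_ne_zero h.symm

theorem refCount_map_of_conj {l : List W} {g : W → W} {t x : W}
    (hg : ∀ y, g y = t ↔ y = x) : refCount (l.map g) t = refCount l x := by
  induction l with
  | nil => rfl
  | cons a l ih => simp only [List.map_cons, refCount_cons, ih, hg]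

variable (cs : CoxeterSystem M W)

local prefix:100 "s" => cs.simple
local prefix:100 "π" => cs.wordProd
local prefix:100 "ℓ" => cs.length

/-- The sign permutation attached to a simple reflection. -/
noncomputable def sgn (i : B) : Equiv.Perm (W × ZMod 2) :=
  Function.Involutive.toPerm
    (fun p => (s i * p.1 * s i, p.2 + if p.1 = s i then 1 else 0))
    (by
      intro p
      have key : ∀ y : W, (s i * y * s i = s i) ↔ (y = s i) := by
        intro y
        constructor
        · intro h
          have := congrArg (fun z => s i * z * s i) h
          simpa [mul_assoc, cs.simple_mul_simple_cancel_left,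
            cs.simple_mul_simple_cancel_right, cs.simple_mul_simple_self] using this
        · rintro rfl; simp [cs.simple_mul_simple_self, cs.simple_mul_simple_cancel_right]
      ext
      · simp [mul_assoc, cs.simple_mul_simple_cancel_left, cs.simple_mul_simple_cancel_right]
      · simp only [key]
        by_cases h : p.1 = s i <;> simp [h, add_assoc] <;> decide
        )

theorem sgn_apply (i : B) (p : W × ZMod 2) :
    sgn cs i p = (s i * p.1 * s i, p.2 + if p.1 = s i then 1 else 0) := rfl

/-- Action of the word `ω` on the sign set, with explicit formula. -/
theorem sgnWord_apply (ω : List B) (t : W) (ε : ZMod 2) :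
    (ω.map (sgn cs)).prod (t, ε) =
      (π ω * t * (π ω)⁻¹, ε + refCount (cs.rightInvSeq ω) t) := by
  induction ω with
  | nil => simp [refCount_nil]
  | cons i ω ih =>
    rw [List.map_cons, List.prod_cons, Equiv.Perm.mul_apply, ih]
    show sgn cs i (π ω * t * (π ω)⁻¹, ε + refCount (cs.rightInvSeq ω) t) = _
    rw [sgn_apply]
    have h1 : s i * (π ω * t * (π ω)⁻¹) * s i = π (i :: ω) * t * (π (i :: ω))⁻¹ := by
      rw [cs.wordProd_cons]
      simp [mul_assoc]
    have h2 : (π ω * t * (π ω)⁻¹ = s i) ↔ ((π ω)⁻¹ * s i * π ω = t) := by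
      constructor
      · intro h
        rw [← h]; group
      · intro h
        rw [← h]; group
    rw [h1]
    have hris : cs.rightInvSeq (i :: ω) = ((π ω)⁻¹ * s i * π ω) :: cs.rightInvSeq ω := rfl
    congr 1
    rw [hris, refCount_cons]
    show (ε + refCount (cs.rightInvSeq ω) t) + _ = _
    by_cases h : (π ω)⁻¹ * s i * π ω = t
    · rw [if_pos h, if_pos (h2.mpr h)]; ring
    · rw [if_neg h, if_neg (fun hh => h (h2.mp hh))]; ring


theorem pow_comm_aux (i i' : B) (k : ℕ) :
    s i' * (s i * s i') ^ k = (s i' * s i) ^ k * s i' := by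
  induction k with
  | zero => simp
  | succ k ih =>
    rw [pow_succ, ← mul_assoc, ih, pow_succ]
    group

/-- The right inversion sequence of an alternating word, explicitly. -/
theorem ris_alternatingWord (i i' : B) (n : ℕ) :
    cs.rightInvSeq (alternatingWord i i' n) =
      ((List.range n).map (fun r => (s i' * s i) ^ r * s i')).reverse := by
  induction n with
  | zero => simp [alternatingWord]
  | succ n ih =>
    rw [alternatingWord_succ', List.range_succ]
    have hris : cs.rightInvSeq ((if Even n then i' else i) :: alternatingWord i i' n)
        = ((π (alternatingWord i i' n))⁻¹ * s (if Even n then i' else i)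
            * π (alternatingWord i i' n)) :: cs.rightInvSeq (alternatingWord i i' n) := rfl
    rw [hris, ih]
    have key : (π (alternatingWord i i' n))⁻¹ * s (if Even n then i' else i)
        * π (alternatingWord i i' n) = (s i' * s i) ^ n * s i' := by
      rw [cs.prod_alternatingWord_eq_mul_pow]
      have hinv : ((s i * s i') ^ (n / 2))⁻¹ = (s i' * s i) ^ (n / 2) := by
        rw [← inv_pow, mul_inv_rev, cs.inv_simple, cs.inv_simple]
      rcases Nat.even_or_odd n with he | ho
      · obtain ⟨k, hk⟩ := id he
        have h2 : n / 2 = k := by omega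
        rw [if_pos he, if_pos he, one_mul, hinv, h2]
        rw [mul_assoc, pow_comm_aux cs i i' k, ← mul_assoc, ← pow_add]
        congr 2
        omega
      · have hne : ¬ Even n := by simpa [Nat.not_even_iff_odd] using ho
        obtain ⟨k, hk⟩ := id ho
        have h2 : n / 2 = k := by omega
        rw [if_neg hne, if_neg hne, mul_inv_rev, hinv, h2]
        calc (s i' * s i) ^ k * (s i')⁻¹ * s i * (s i' * (s i * s i') ^ k)
            = (s i' * s i) ^ k * ((s i')⁻¹ * s i * s i') * (s i * s i') ^ k := by group
          _ = (s i' * s i) ^ k * (s i' * s i * s i') * (s i * s i') ^ k := by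
              rw [cs.inv_simple]
          _ = (s i' * s i) ^ (k + 1) * (s i' * (s i * s i') ^ k) := by
              rw [pow_succ]; group
          _ = (s i' * s i) ^ (k + 1) * ((s i' * s i) ^ k * s i') := by
              rw [pow_comm_aux cs i i']
          _ = (s i' * s i) ^ n * s i' := by rw [← mul_assoc, ← pow_add]; congr 2; omega
    rw [key, List.map_append, List.reverse_append]
    simp

theorem refCount_ris_alternatingWord_even (i i' : B) (t : W) :
    refCount (cs.rightInvSeq (alternatingWord i i' (2 * M i i'))) t = 0 := by
  rw [ris_alternatingWord]
  set m := M i i'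
  set g : ℕ → W := fun r => (s i' * s i) ^ r * s i' with hg
  have hper : ∀ r, g (m + r) = g r := by
    intro r
    simp only [hg]
    rw [add_comm, pow_add, cs.simple_mul_simple_pow' i i', mul_one]
  have h2m : 2 * m = m + m := by omega
  rw [h2m, List.range_add, List.map_append]
  have hmap : (List.map (m + ·) (List.range m)).map g = (List.range m).map g := by
    rw [List.map_map]
    exact List.map_congr_left (fun r _ => hper r)
  rw [hmap]
  -- refCount of reverse
  have hrev : ∀ (l : List W) (t : W), refCount l.reverse t = refCount l t := by
    intro l t
    induction l with
    | nil => rfl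
    | cons x l ih =>
      rw [List.reverse_cons, refCount_append, ih, refCount_cons, refCount_cons, refCount_nil]
      ring
  rw [hrev, refCount_append]
  have : ∀ c : ZMod 2, c + c = 0 := by decide
  exact this _

/-- The alternating word of even length as an iterated two-letter prefix. -/
theorem alternatingWord_two_mul_succ (i i' : B) (n : ℕ) :
    alternatingWord i i' (2 * (n + 1)) = i :: i' :: alternatingWord i i' (2 * n) := by
  have h1 : 2 * (n + 1) = (2 * n + 1) + 1 := by omega
  rw [h1, alternatingWord_succ', alternatingWord_succ']
  have : ¬ Even (2 * n + 1) := by simp [Nat.even_add_one]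
  rw [if_neg this, if_pos (by simp : Even (2 * n))]

theorem sgn_liftable : M.IsLiftable (fun i => sgn cs i) := by
  intro i i'
  have key : ∀ n : ℕ, (sgn cs i * sgn cs i') ^ n
      = ((alternatingWord i i' (2 * n)).map (sgn cs)).prod := by
    intro n
    induction n with
    | zero => simp [alternatingWord]
    | succ n ih =>
      rw [alternatingWord_two_mul_succ, List.map_cons, List.map_cons, List.prod_cons,
        List.prod_cons, ← ih, pow_succ', mul_assoc]
  rw [key]
  ext p
  · rw [sgnWord_apply]
    have hπ : π (alternatingWord i i' (2 * M i i')) = 1 := by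
      rw [cs.prod_alternatingWord_eq_mul_pow, if_pos (by simp : Even (2 * M i i'))]
      rw [one_mul]
      have : 2 * M i i' / 2 = M i i' := by omega
      rw [this, cs.simple_mul_simple_pow]
    rw [hπ]
    simp
  · rw [sgnWord_apply, refCount_ris_alternatingWord_even]
    simp



noncomputable def rho : W →* Equiv.Perm (W × ZMod 2) :=
  CoxeterSystem.lift cs ⟨fun i => sgn cs i, sgn_liftable cs⟩

theorem rho_simple (i : B) : rho cs (s i) = sgn cs i :=
  cs.lift_apply_simple (sgn_liftable cs) i

theorem rho_wordProd (ω : List B) : rho cs (π ω) = (ω.map (sgn cs)).prod := by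
  induction ω with
  | nil => simp
  | cons i ω ih => rw [cs.wordProd_cons, map_mul, rho_simple, List.map_cons, List.prod_cons, ih]

/-- The sign of the reflection `t` at the element `w`. -/
noncomputable def rsign (w t : W) : ZMod 2 := ((rho cs w) (t, 0)).2

theorem rho_apply (w t : W) (ε : ZMod 2) :
    rho cs w (t, ε) = (w * t * w⁻¹, ε + rsign cs w t) := by
  obtain ⟨ω, rfl⟩ := cs.wordProd_surjective w
  simp [rsign, rho_wordProd, sgnWord_apply]

theorem rsign_mul (u v t : W) :
    rsign cs (u * v) t = rsign cs v t + rsign cs u (v * t * v⁻¹) := by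
  have h : rho cs (u * v) (t, 0) = rho cs u (rho cs v (t, 0)) := by
    rw [map_mul]; rfl
  rw [rsign, h, rho_apply, rho_apply]
  simp

theorem rsign_simple (i : B) (t : W) :
    rsign cs (s i) t = if t = s i then 1 else 0 := by
  simp [rsign, rho_simple, sgn_apply]

theorem conj_simple_eq_simple_iff (i : B) (t : W) :
    s i * t * s i = s i ↔ t = s i := by
  constructor
  · intro h
    have := congrArg (fun z => s i * z * s i) h
    simpa [mul_assoc, cs.simple_mul_simple_cancel_left,
      cs.simple_mul_simple_cancel_right, cs.simple_mul_simple_self] using this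
  · rintro rfl; simp [cs.simple_mul_simple_self, cs.simple_mul_simple_cancel_right]

theorem rsign_conj_simple_self (j : B) (t : W) :
    rsign cs (s j * t * s j) (s j * t * s j) = rsign cs t t := by
  have h2 : s j * (s j * t * s j) * (s j)⁻¹ = t := by
    rw [cs.inv_simple]
    simp [mul_assoc, cs.simple_mul_simple_cancel_left, cs.simple_mul_simple_cancel_right]
  have h1 := rsign_mul cs (s j * t) (s j) (s j * t * s j)
  rw [h2] at h1
  have h3 := rsign_mul cs (s j) t t
  have h4 : t * t * t⁻¹ = t := by group
  rw [h4] at h3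
  rw [h3] at h1
  have hiff : (s j * t * s j = s j) ↔ (t = s j) := conj_simple_eq_simple_iff cs j t
  have h6 : rsign cs (s j) (s j * t * s j) = rsign cs (s j) t := by
    rw [rsign_simple, rsign_simple]
    by_cases h : t = s j
    · rw [if_pos h, if_pos (hiff.mpr h)]
    · rw [if_neg h, if_neg fun hh => h (hiff.mp hh)]
  rw [h6] at h1
  have h7 := (by decide : ∀ c : ZMod 2, c + c = 0) (rsign cs (s j) t)
  rw [h1]
  linear_combination h7

theorem rsign_self_eq_one {t : W} (ht : cs.IsReflection t) : rsign cs t t = 1 := by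
  obtain ⟨w, i, rfl⟩ := ht
  induction w using cs.simple_induction_left with
  | one => simpa using (by rw [rsign_simple]; simp : rsign cs (s i) (s i) = 1)
  | mul_simple_left w j ih =>
    have hrw : (s j * w) * s i * (s j * w)⁻¹ = s j * (w * s i * w⁻¹) * s j := by
      rw [mul_inv_rev, cs.inv_simple]; group
    rw [hrw, rsign_conj_simple_self]
    exact ih

theorem rsign_one_imp {w t : W} (ht : cs.IsReflection t) (h : rsign cs w t = 1) :
    ℓ (w * t) < ℓ w := by
  obtain ⟨ω, hred, rfl⟩ := cs.exists_reduced_word' w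
  have hc : rsign cs (π ω) t = refCount (cs.rightInvSeq ω) t := by
    simp [rsign, rho_wordProd, sgnWord_apply]
  rw [hc] at h
  exact (cs.isRightInversion_of_mem_rightInvSeq hred (mem_of_refCount_eq_one h)).2

theorem isRightInversion_iff_rsign {t : W} (ht : cs.IsReflection t) (w : W) :
    ℓ (w * t) < ℓ w ↔ rsign cs w t = 1 := by
  constructor
  · intro hlt
    rcases (by decide : ∀ c : ZMod 2, c = 0 ∨ c = 1) (rsign cs w t) with h0 | h1
    · exfalso
      have hwt : rsign cs (w * t) t = 1 := by
        rw [rsign_mul, mul_inv_cancel_right, h0, add_zero]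
        exact rsign_self_eq_one cs ht
      have := rsign_one_imp cs ht hwt
      rw [mul_assoc, ht.mul_self, mul_one] at this
      omega
    · exact h1
  · exact rsign_one_imp cs ht

/-! ### Bruhat order basic steps -/

theorem bruhat_step {a t : W} (ht : cs.IsReflection t) (h : ℓ a < ℓ (a * t)) :
    BruhatLE cs a (a * t) :=
  Relation.ReflTransGen.single ⟨⟨t, ht, rfl⟩, h⟩

theorem descent_step_right {w : W} {i : B} (h : ℓ (w * s i) < ℓ w) :
    BruhatLE cs (w * s i) w := by
  have h2 : (w * s i) * s i = w := cs.simple_mul_simple_cancel_right i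
  have := bruhat_step cs (cs.isReflection_simple i) (a := w * s i) (by rw [h2]; exact h)
  rwa [h2] at this

theorem descent_step_left {w : W} {i : B} (h : ℓ (s i * w) < ℓ w) :
    BruhatLE cs (s i * w) w := by
  have ht : cs.IsReflection (w⁻¹ * s i * w) := by
    have := (cs.isReflection_simple i).conj w⁻¹
    rwa [inv_inv] at this
  have h2 : (s i * w) * (w⁻¹ * s i * w) = w := by
    simp [mul_assoc, cs.simple_mul_simple_cancel_left]
  have := bruhat_step cs ht (a := s i * w) (by rw [h2]; exact h)
  rwa [h2] at this

theorem conj_by_simple_eq (u : W) (t : W) (i : B) :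
    (u * s i) * (s i * t * s i) = u * t * s i := by
  simp [mul_assoc, cs.simple_mul_simple_cancel_left]

/-- Lifting property, right version. -/
theorem Z1 {v w : W} (h : BruhatLE cs v w) (i : B) (hws : ℓ (w * s i) < ℓ w) :
    BruhatLE cs v (w * s i) ∨ BruhatLE cs (v * s i) (w * s i) := by
  have h' : Relation.ReflTransGen
      (fun a b => (∃ t, cs.IsReflection t ∧ b = a * t) ∧ ℓ a < ℓ b) v w := h
  clear h
  induction h' with
  | refl => right; exact Relation.ReflTransGen.refl
  | @tail u c hvu hstep ih =>
    obtain ⟨⟨t, ht, rfl⟩, hlen⟩ := hstep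
    rename_i hws'
    by_cases hus : ℓ (u * s i) < ℓ u
    · -- go down at u, then step across
      have hd := cs.length_mul_simple (u * t) i
      have hlen2 : ℓ (u * s i) < ℓ ((u * s i) * (s i * t * s i)) := by
        rw [conj_by_simple_eq]
        omega
      have hstep2 : BruhatLE cs (u * s i) (u * t * s i) := by
        have := bruhat_step cs (by
          have := ht.conj (s i)
          rwa [cs.inv_simple] at this) hlen2
        rwa [conj_by_simple_eq] at this
      rcases ih hus with h1 | h1
      · exact Or.inl (h1.trans hstep2)
      · exact Or.inr (h1.trans hstep2)
    · by_cases hts : t = s i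
      · left
        have huu : u * t * s i = u := by rw [hts, cs.simple_mul_simple_cancel_right]
        rw [huu]
        exact hvu
      · left
        have huus : ℓ u < ℓ (u * s i) := by
          have := cs.length_mul_simple_ne u i
          omega
        have h_u_us : BruhatLE cs u (u * s i) := bruhat_step cs (cs.isReflection_simple i) huus
        have ht' : cs.IsReflection (s i * t * s i) := by
          have := ht.conj (s i)
          rwa [cs.inv_simple] at this
        -- the sign of s i * t * s i at u * t * s i is 1
        have hsign : rsign cs ((u * t) * s i) (s i * t * s i) = 1 := by
          rw [rsign_mul]
          have e1 : s i * (s i * t * s i) * (s i)⁻¹ = t := by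
            rw [cs.inv_simple]
            simp [mul_assoc, cs.simple_mul_simple_cancel_left, cs.simple_mul_simple_cancel_right]
          rw [e1, rsign_simple]
          have e2 : ¬ (s i * t * s i = s i) := fun hh =>
            hts ((conj_simple_eq_simple_iff cs i t).mp hh)
          rw [if_neg e2, zero_add]
          have e3 : (u * t) * t = u := by rw [mul_assoc, ht.mul_self, mul_one]
          have := (isRightInversion_iff_rsign cs ht (u * t)).mp (by rw [e3]; exact hlen)
          exact this
        have hlen3 : ℓ ((u * t * s i) * (s i * t * s i)) < ℓ (u * t * s i) :=
          (isRightInversion_iff_rsign cs ht' (u * t * s i)).mpr hsign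
        have e4 : (u * t * s i) * (s i * t * s i) = u * s i := by
          have htt : t * (t * s i) = s i := by rw [← mul_assoc, ht.mul_self, one_mul]
          simp [mul_assoc, cs.simple_mul_simple_cancel_left, htt]
        rw [e4] at hlen3
        have hstep3 : BruhatLE cs (u * s i) (u * t * s i) := by
          have := bruhat_step cs ht' (a := u * s i) (by rw [conj_by_simple_eq]; exact hlen3)
          rwa [conj_by_simple_eq] at this
        exact hvu.trans (h_u_us.trans hstep3)

/-- Lifting property, left version. -/
theorem Z2 {u q : W} (h : BruhatLE cs u q) (i : B) (hq : ℓ (s i * q) < ℓ q) :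
    BruhatLE cs (s i * u) q := by
  have h' : Relation.ReflTransGen
      (fun a b => (∃ t, cs.IsReflection t ∧ b = a * t) ∧ ℓ a < ℓ b) u q := h
  clear h
  induction h' using Relation.ReflTransGen.head_induction_on with
  | refl => exact descent_step_left cs hq
  | @head a b hstep hrest ih =>
    obtain ⟨⟨t, ht, rfl⟩, hlen⟩ := hstep
    by_cases hcmp : ℓ (s i * a) < ℓ ((s i * a) * t)
    · have hstep2 : BruhatLE cs (s i * a) (s i * (a * t)) := by
        have := bruhat_step cs ht hcmp
        rwa [mul_assoc] at this
      exact hstep2.trans ih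
    · have hne : ℓ ((s i * a) * t) ≠ ℓ (s i * a) := ht.length_mul_left_ne (s i * a)
      have h1 : rsign cs (s i * a) t = 1 :=
        (isRightInversion_iff_rsign cs ht (s i * a)).mp (by omega)
      have h0 : rsign cs a t = 0 := by
        rcases (by decide : ∀ c : ZMod 2, c = 0 ∨ c = 1) (rsign cs a t) with hc | hc
        · exact hc
        · exfalso
          have := (isRightInversion_iff_rsign cs ht a).mpr hc
          omega
      have h2 : rsign cs (s i * a) t = rsign cs a t + rsign cs (s i) (a * t * a⁻¹) :=
        rsign_mul cs (s i) a t
      rw [h0, zero_add, rsign_simple] at h2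
      rw [h2] at h1
      have h3 : a * t * a⁻¹ = s i := by
        by_contra hc
        rw [if_neg hc] at h1
        exact one_ne_zero h1.symm
      have h4 : s i * a = a * t := by
        rw [← h3]
        group
      rw [h4]
      exact hrest

/-- Auxiliary induction for the second lifting lemma. -/
theorem lift_aux : ∀ n : ℕ, ∀ v w x z : W, ℓ x ≤ n → BruhatLE cs v w → w = z * x →
    ℓ w = ℓ z + ℓ x → ∃ x', BruhatLE cs x' x⁻¹ ∧ BruhatLE cs (v * x') z := by
  intro n
  induction n with
  | zero =>
    intro v w x z hn h hw hl
    have hx : x = 1 := cs.length_eq_zero_iff.mp (by omega)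
    subst hx
    rw [mul_one] at hw
    subst hw
    exact ⟨1, by rw [inv_one]; exact Relation.ReflTransGen.refl, by rw [mul_one]; exact h⟩
  | succ n ih =>
    intro v w x z hn h hw hl
    by_cases hx1 : x = 1
    · subst hx1
      rw [mul_one] at hw
      subst hw
      exact ⟨1, by rw [inv_one]; exact Relation.ReflTransGen.refl, by rw [mul_one]; exact h⟩
    · obtain ⟨i, hi⟩ := cs.exists_rightDescent_of_ne_one hx1
      have hi' : ℓ (x * s i) < ℓ x := hi
      have hd := cs.length_mul_simple x i
      have hx₁len : ℓ (x * s i) + 1 = ℓ x := by omega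
      have hw₁ : w * s i = z * (x * s i) := by rw [hw, mul_assoc]
      have hwd := cs.length_mul_simple w i
      have hle' : ℓ (w * s i) ≤ ℓ z + ℓ (x * s i) := by
        rw [hw₁]; exact cs.length_mul_le z (x * s i)
      have hw₁len : ℓ (w * s i) = ℓ z + ℓ (x * s i) := by omega
      have hwdesc : ℓ (w * s i) < ℓ w := by omega
      have hxinv : s i * x⁻¹ = (x * s i)⁻¹ := by
        rw [mul_inv_rev, cs.inv_simple]
      have hlinv : ℓ (s i * x⁻¹) < ℓ x⁻¹ := by
        rw [hxinv, cs.length_inv, cs.length_inv]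
        omega
      have hx₁x : BruhatLE cs (x * s i)⁻¹ x⁻¹ := by
        have := descent_step_left cs hlinv
        rwa [hxinv] at this
      rcases Z1 cs h i hwdesc with h1 | h1
      · obtain ⟨x'', hx''1, hx''2⟩ := ih v (w * s i) (x * s i) z (by omega) h1 hw₁ hw₁len
        exact ⟨x'', hx''1.trans hx₁x, hx''2⟩
      · obtain ⟨x'', hx''1, hx''2⟩ := ih (v * s i) (w * s i) (x * s i) z (by omega) h1 hw₁ hw₁len
        refine ⟨s i * x'', ?_, ?_⟩
        · exact Z2 cs (hx''1.trans hx₁x) i hlinv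
        · rw [← mul_assoc]; exact hx''2


end LiftingAux

/-- Second lifting lemma: if `v ≤ w` and `w = z * x` reduced, then there is
`x' ≤ x⁻¹` with `v * x' ≤ z`. -/
theorem lifting_two_right (cs : CoxeterSystem M W) (v w x z : W) (h : BruhatLE cs v w)
    (hw : w = z * x) (hl : cs.length w = cs.length z + cs.length x) :
    ∃ x', BruhatLE cs x' x⁻¹ ∧ BruhatLE cs (v * x') z :=
  lift_aux cs (cs.length x) v w x z le_rfl h hw hl

end CoxeterPaper
end
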